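/- A self-adjoint contraction semigroup: if R : [0,∞) → bounded operators on a Hilbert space H is strongly continuous, R(0) = I, each R(t) is self-adjoint, ‖R(t)‖ ≤ 1, and R(t)R(s) = R(t+s), then there exists a densely defined positive self-adjoint operator H₀ with R(t) = exp(−tH₀) for all t ≥ 0; moreover any vector Ω with R(t)Ω = Ω for all t satisfies H₀Ω = 0. -/

import Mathlib

open MeasureTheory Set Topology Filter
open scoped ComplexInnerProductSpace

set_option linter.unusedSectionVars false
set_option linter.unusedVariables false

section SGAux

variable {H : Type*} [NormedAddCommGroup H] [InnerProductSpace ℂ H] [CompleteSpace H]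
variable {R : ℝ → H →L[ℂ] H}

lemma sgIntegrable (hcont : ∀ v : H, ContinuousOn (fun t : ℝ => R t v) (Set.Ici 0))
    (hcontr : ∀ t : ℝ, 0 ≤ t → ‖R t‖ ≤ 1) (v : H) :
    IntegrableOn (fun s => Real.exp (-s) • R s v) (Ioi (0:ℝ)) := by
  have hm : AEStronglyMeasurable (fun s => Real.exp (-s) • R s v)
      (volume.restrict (Ioi (0:ℝ))) :=
    (((Real.continuous_exp.comp continuous_neg).continuousOn).smul
      ((hcont v).mono Ioi_subset_Ici_self)).aestronglyMeasurable measurableSet_Ioi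
  have hbound : IntegrableOn (fun s : ℝ => Real.exp (-s) * ‖v‖) (Ioi (0:ℝ)) := by
    simpa [IntegrableOn] using (exp_neg_integrableOn_Ioi 0 one_pos).mul_const ‖v‖
  refine Integrable.mono' hbound hm ?_
  filter_upwards [self_mem_ae_restrict measurableSet_Ioi] with s hs
  rw [norm_smul, Real.norm_eq_abs, abs_of_pos (Real.exp_pos _)]
  have h1 : ‖R s v‖ ≤ ‖v‖ := by
    calc ‖R s v‖ ≤ ‖R s‖ * ‖v‖ := (R s).le_opNorm v
    _ ≤ 1 * ‖v‖ := mul_le_mul_of_nonneg_right (hcontr s (le_of_lt hs)) (norm_nonneg v)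
    _ = ‖v‖ := one_mul _
  exact mul_le_mul_of_nonneg_left h1 (Real.exp_pos _).le

lemma sgNormBound (hcont : ∀ v : H, ContinuousOn (fun t : ℝ => R t v) (Set.Ici 0))
    (hcontr : ∀ t : ℝ, 0 ≤ t → ‖R t‖ ≤ 1) (v : H) :
    ‖∫ s in Ioi (0:ℝ), Real.exp (-s) • R s v‖ ≤ 1 * ‖v‖ := by
  rw [one_mul]
  have hbound : IntegrableOn (fun s : ℝ => Real.exp (-s) * ‖v‖) (Ioi (0:ℝ)) := by
    simpa [IntegrableOn] using (exp_neg_integrableOn_Ioi 0 one_pos).mul_const ‖v‖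
  calc ‖∫ s in Ioi (0:ℝ), Real.exp (-s) • R s v‖
      ≤ ∫ s in Ioi (0:ℝ), Real.exp (-s) * ‖v‖ := by
        refine norm_integral_le_of_norm_le hbound ?_
        filter_upwards [self_mem_ae_restrict measurableSet_Ioi] with s hs
        rw [norm_smul, Real.norm_eq_abs, abs_of_pos (Real.exp_pos _)]
        have h1 : ‖R s v‖ ≤ ‖v‖ := by
          calc ‖R s v‖ ≤ ‖R s‖ * ‖v‖ := (R s).le_opNorm v
          _ ≤ 1 * ‖v‖ := mul_le_mul_of_nonneg_right (hcontr s (le_of_lt hs)) (norm_nonneg v)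
          _ = ‖v‖ := one_mul _
        exact mul_le_mul_of_nonneg_left h1 (Real.exp_pos _).le
    _ = (∫ s in Ioi (0:ℝ), Real.exp (-s)) * ‖v‖ := integral_mul_const _ _
    _ = ‖v‖ := by rw [integral_exp_neg_Ioi_zero, one_mul]

/-- The operator `B = ∫₀^∞ e^{-s} R(s) ds`. -/
noncomputable def sgB (hcont : ∀ v : H, ContinuousOn (fun t : ℝ => R t v) (Set.Ici 0))
    (hcontr : ∀ t : ℝ, 0 ≤ t → ‖R t‖ ≤ 1) : H →L[ℂ] H :=
  LinearMap.mkContinuous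
    { toFun := fun v => ∫ s in Ioi (0:ℝ), Real.exp (-s) • R s v
      map_add' := fun v w => by
        rw [← integral_add (sgIntegrable hcont hcontr v) (sgIntegrable hcont hcontr w)]
        refine setIntegral_congr_fun measurableSet_Ioi fun s _ => ?_
        rw [map_add, smul_add]
      map_smul' := fun c v => by
        rw [← integral_smul]
        refine setIntegral_congr_fun measurableSet_Ioi fun s _ => ?_
        rw [RingHom.id_apply, _root_.map_smul, smul_comm] }
    1 (fun v => sgNormBound hcont hcontr v)

lemma sgB_apply (hcont : ∀ v : H, ContinuousOn (fun t : ℝ => R t v) (Set.Ici 0))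
    (hcontr : ∀ t : ℝ, 0 ≤ t → ‖R t‖ ≤ 1) (v : H) :
    sgB hcont hcontr v = ∫ s in Ioi (0:ℝ), Real.exp (-s) • R s v := rfl

lemma sgB_norm (hcont : ∀ v : H, ContinuousOn (fun t : ℝ => R t v) (Set.Ici 0))
    (hcontr : ∀ t : ℝ, 0 ≤ t → ‖R t‖ ≤ 1) :
    ‖sgB hcont hcontr‖ ≤ 1 :=
  LinearMap.mkContinuous_norm_le _ zero_le_one _

end SGAux

set_option maxHeartbeats 1000000 in
/-- **Self-adjoint contraction semigroups have positive self-adjoint generators.**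
If `R : [0,∞) → B(H)` is strongly continuous, `R(0) = I`, each `R(t)` is self-adjoint,
`‖R(t)‖ ≤ 1` and `R(t)R(s) = R(t+s)`, then there exists a densely defined positive
self-adjoint operator `H₀` with `R(t) = exp(−tH₀)` for `t ≥ 0` (expressed by the
generator property `d/dt R(t)v = −R(t) H₀ v` for `v` in the domain of `H₀`); moreover
any vector `Ω` with `R(t)Ω = Ω` for all `t ≥ 0` lies in the domain and `H₀ Ω = 0`. -/
theorem selfadjoint_contraction_semigroup_generator
    {H : Type*} [NormedAddCommGroup H] [InnerProductSpace ℂ H] [CompleteSpace H]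
    (R : ℝ → H →L[ℂ] H)
    (hcont : ∀ v : H, ContinuousOn (fun t : ℝ => R t v) (Set.Ici 0))
    (hzero : R 0 = ContinuousLinearMap.id ℂ H)
    (hsa : ∀ t : ℝ, 0 ≤ t → IsSelfAdjoint (R t))
    (hcontr : ∀ t : ℝ, 0 ≤ t → ‖R t‖ ≤ 1)
    (hsemi : ∀ t s : ℝ, 0 ≤ t → 0 ≤ s → (R t).comp (R s) = R (t + s)) :
    ∃ H₀ : H →ₗ.[ℂ] H,
      -- densely defined
      Dense (H₀.domain : Set H) ∧
      -- self-adjoint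
      H₀.adjoint = H₀ ∧
      -- positive
      (∀ x : H₀.domain, 0 ≤ (⟪H₀ x, (x : H)⟫).re) ∧
      -- `R(t) = exp(−t H₀)`: the semigroup is differentiable on the domain of `H₀`
      -- with derivative `−R(t) H₀`
      (∀ x : H₀.domain, ∀ t : ℝ, 0 < t →
        HasDerivAt (fun s : ℝ => R s (x : H)) (-(R t (H₀ x))) t) ∧
      -- an invariant vector is a ground state: `H₀ Ω = 0`
      (∀ Ω : H, (∀ t : ℝ, 0 ≤ t → R t Ω = Ω) →
        ∃ hΩ : Ω ∈ H₀.domain, H₀ ⟨Ω, hΩ⟩ = 0) := by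
  classical
  set Bc : H →L[ℂ] H := sgB hcont hcontr with hBcdef
  have hBapp : ∀ v, Bc v = ∫ s in Ioi (0:ℝ), Real.exp (-s) • R s v := fun v => rfl
  have hBnorm : ‖Bc‖ ≤ 1 := sgB_norm hcont hcontr
  -- pointwise self-adjointness
  have hsaR : ∀ s : ℝ, 0 ≤ s → ∀ x y : H, ⟪R s x, y⟫ = ⟪x, R s y⟫ := by
    intro s hs x y
    conv_lhs => rw [← ContinuousLinearMap.isSelfAdjoint_iff'.mp (hsa s hs)]
    exact ContinuousLinearMap.adjoint_inner_left _ _ _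
  -- semigroup halving
  have hhalf : ∀ s : ℝ, 0 ≤ s → ∀ v : H, R (s/2) (R (s/2) v) = R s v := by
    intro s hs v
    have h1 := hsemi (s/2) (s/2) (by linarith) (by linarith)
    have h2 : s/2 + s/2 = s := by ring
    calc R (s/2) (R (s/2) v) = ((R (s/2)).comp (R (s/2))) v := rfl
    _ = R s v := by rw [h1, h2]
  have hq : ∀ (v : H) (s : ℝ), 0 ≤ s → ⟪v, R s v⟫ = ((‖R (s/2) v‖^2 : ℝ) : ℂ) := by
    intro v s hs
    rw [← hhalf s hs v, ← hsaR (s/2) (by linarith) v (R (s/2) v),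
      inner_self_eq_norm_sq_to_K]
    norm_cast
  have hBinner : ∀ v w : H, ⟪w, Bc v⟫ = ∫ s in Ioi (0:ℝ), ⟪w, Real.exp (-s) • R s v⟫ := by
    intro v w
    rw [hBapp]
    exact (integral_inner (sgIntegrable hcont hcontr v) w).symm
  have hBreal : ∀ v : H,
      ⟪v, Bc v⟫ = ((∫ s in Ioi (0:ℝ), Real.exp (-s) * ‖R (s/2) v‖^2 : ℝ) : ℂ) := by
    intro v
    have hcast : (∫ s in Ioi (0:ℝ), ((Real.exp (-s) * ‖R (s/2) v‖^2 : ℝ) : ℂ))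
        = ((∫ s in Ioi (0:ℝ), Real.exp (-s) * ‖R (s/2) v‖^2 : ℝ) : ℂ) := integral_ofReal
    rw [hBinner v v, ← hcast]
    refine setIntegral_congr_fun measurableSet_Ioi fun s hs => ?_
    rw [RCLike.real_smul_eq_coe_smul (K := ℂ), inner_smul_right, hq v s (le_of_lt hs)]
    exact (Complex.ofReal_mul _ _).symm
  -- integrability of the real integrand
  have hgint : ∀ v : H,
      IntegrableOn (fun s : ℝ => Real.exp (-s) * ‖R (s/2) v‖^2) (Ioi (0:ℝ)) := by
    intro v
    have hc2 : ContinuousOn (fun s : ℝ => R (s/2) v) (Ici (0:ℝ)) := by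
      refine (hcont v).comp (continuous_id.div_const 2).continuousOn ?_
      intro s hs
      exact mem_Ici.mpr (div_nonneg (mem_Ici.mp hs) (by norm_num))
    have hm : AEStronglyMeasurable (fun s : ℝ => Real.exp (-s) * ‖R (s/2) v‖^2)
        (volume.restrict (Ioi (0:ℝ))) :=
      ((((Real.continuous_exp.comp continuous_neg).continuousOn).mul
        ((hc2.norm).pow 2)).mono Ioi_subset_Ici_self).aestronglyMeasurable measurableSet_Ioi
    have hbound : IntegrableOn (fun s : ℝ => Real.exp (-s) * ‖v‖^2) (Ioi (0:ℝ)) := by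
      simpa [IntegrableOn] using (exp_neg_integrableOn_Ioi 0 one_pos).mul_const (‖v‖^2)
    refine Integrable.mono' hbound hm ?_
    filter_upwards [self_mem_ae_restrict measurableSet_Ioi] with s hs
    have h1 : ‖R (s/2) v‖ ≤ ‖v‖ := by
      calc ‖R (s/2) v‖ ≤ ‖R (s/2)‖ * ‖v‖ := (R (s/2)).le_opNorm v
      _ ≤ 1 * ‖v‖ := mul_le_mul_of_nonneg_right
          (hcontr (s/2) (div_nonneg (le_of_lt hs) (by norm_num))) (norm_nonneg v)
      _ = ‖v‖ := one_mul _
    have h2 : ‖R (s/2) v‖^2 ≤ ‖v‖^2 := pow_le_pow_left₀ (norm_nonneg _) h1 2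
    rw [Real.norm_eq_abs, abs_of_nonneg (by positivity)]
    exact mul_le_mul_of_nonneg_left h2 (Real.exp_pos _).le
  -- vanishing lemma : `⟪v, Bv⟫ = 0 → v = 0`
  have hvanish : ∀ v : H, ⟪v, Bc v⟫ = 0 → v = 0 := by
    intro v hv
    have hI : (∫ s in Ioi (0:ℝ), Real.exp (-s) * ‖R (s/2) v‖^2) = 0 := by
      have h0 := hBreal v
      rw [hv] at h0
      exact_mod_cast h0.symm
    have hae : (fun s : ℝ => Real.exp (-s) * ‖R (s/2) v‖^2)
        =ᵐ[volume.restrict (Ioi (0:ℝ))] 0 := by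
      refine (integral_eq_zero_iff_of_nonneg_ae ?_ (hgint v)).mp hI
      filter_upwards [self_mem_ae_restrict measurableSet_Ioi] with s _ using by positivity
    have hseq : ∀ n : ℕ, ∃ s : ℝ, s ∈ Ioo (0:ℝ) (1/(n+1)) ∧ R (s/2) v = 0 := by
      intro n
      have hmeasne : volume (Ioo (0:ℝ) (1/(n+1))) ≠ 0 := by
        rw [Real.volume_Ioo]
        simp only [ne_eq, ENNReal.ofReal_eq_zero, not_le, sub_zero]
        positivity
      have h1 : (fun s : ℝ => Real.exp (-s) * ‖R (s/2) v‖^2)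
          =ᵐ[volume.restrict (Ioo (0:ℝ) (1/(n+1)))] 0 :=
        ae_restrict_of_ae_restrict_of_subset (fun s hs => hs.1) hae
      have hne : (ae (volume.restrict (Ioo (0:ℝ) (1/(n+1))))).NeBot :=
        ae_neBot.mpr (by rwa [Ne, Measure.restrict_eq_zero])
      obtain ⟨s, hs0, hsmem⟩ := (h1.and (ae_restrict_mem measurableSet_Ioo)).exists
      refine ⟨s, hsmem, ?_⟩
      have h2 : ‖R (s/2) v‖^2 = 0 := by
        have hexp := (Real.exp_pos (-s)).ne'
        have : Real.exp (-s) * ‖R (s/2) v‖^2 = 0 := hs0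
        exact (mul_eq_zero.mp this).resolve_left hexp
      have : ‖R (s/2) v‖ = 0 := by nlinarith [norm_nonneg (R (s/2) v)]
      simpa using this
    choose u hu1 hu2 using hseq
    have hu0 : Filter.Tendsto (fun n : ℕ => u n / 2) Filter.atTop (𝓝 0) := by
      have h1 : Filter.Tendsto u Filter.atTop (𝓝 0) := by
        refine squeeze_zero_norm (fun n => ?_) tendsto_one_div_add_atTop_nhds_zero_nat
        rw [Real.norm_eq_abs, abs_of_pos (hu1 n).1]
        exact (hu1 n).2.le
      simpa using h1.div_const 2
    have hmem2 : ∀ n : ℕ, u n / 2 ∈ Ici (0:ℝ) := fun n =>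
      mem_Ici.mpr (le_of_lt (by have := (hu1 n).1; positivity))
    have htend : Filter.Tendsto (fun n : ℕ => R (u n / 2) v) Filter.atTop (𝓝 v) := by
      have hcw : Filter.Tendsto (fun t : ℝ => R t v) (nhdsWithin 0 (Ici 0)) (𝓝 v) := by
        have := (hcont v) 0 self_mem_Ici
        have h0 : R 0 v = v := by rw [hzero]; rfl
        simpa [ContinuousWithinAt, h0] using this
      exact hcw.comp (tendsto_nhdsWithin_iff.mpr
        ⟨hu0, Filter.Eventually.of_forall hmem2⟩)
    have hzero' : Filter.Tendsto (fun _ : ℕ => (0:H)) Filter.atTop (𝓝 v) := by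
      refine htend.congr fun n => ?_
      rw [hu2 n]
    exact (tendsto_nhds_unique tendsto_const_nhds hzero').symm
  -- symmetry of B
  have hBsym : ∀ v w : H, ⟪Bc v, w⟫ = ⟪v, Bc w⟫ := by
    intro v w
    rw [← inner_conj_symm (Bc v) w, hBinner v w, ← integral_conj, hBinner w v]
    refine setIntegral_congr_fun measurableSet_Ioi fun s hs => ?_
    rw [inner_conj_symm, RCLike.real_smul_eq_coe_smul (K := ℂ),
      RCLike.real_smul_eq_coe_smul (K := ℂ), inner_smul_left, inner_smul_right,
      hsaR s (le_of_lt hs) v w, RCLike.conj_ofReal]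
  have hBposAll : ∀ v : H, 0 ≤ (⟪v, Bc v⟫).re := by
    intro v
    rw [hBreal v, Complex.ofReal_re]
    exact setIntegral_nonneg measurableSet_Ioi fun s _ => by positivity
  -- injectivity
  have hinj : Function.Injective (Bc : H →ₗ[ℂ] H) := by
    intro a b hab
    have h1 : Bc (a - b) = 0 := by
      have : Bc a = Bc b := hab
      rw [map_sub, this, sub_self]
    have h2 : ⟪a - b, Bc (a - b)⟫ = 0 := by rw [h1, inner_zero_right]
    have := hvanish _ h2
    exact sub_eq_zero.mp this
  -- the generator
  set D : Submodule ℂ H := LinearMap.range (Bc : H →ₗ[ℂ] H) with hDdef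
  have hmem : ∀ v : H, Bc v ∈ D := fun v => ⟨v, rfl⟩
  set e : H ≃ₗ[ℂ] D := LinearEquiv.ofInjective (Bc : H →ₗ[ℂ] H) hinj with hedef
  set H₀ : H →ₗ.[ℂ] H := ⟨D, e.symm.toLinearMap - D.subtype⟩ with hH₀def
  have hecoe : ∀ v : H, ((e v : D) : H) = Bc v := fun v => by
    rw [hedef]; rfl
  have hargs : ∀ (v : H) (h : Bc v ∈ D), (⟨Bc v, h⟩ : D) = e v := fun v h =>
    Subtype.ext (hecoe v).symm
  have hval : ∀ (v : H) (h : Bc v ∈ D), H₀ ⟨Bc v, h⟩ = v - Bc v := by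
    intro v h
    show (e.symm.toLinearMap - D.subtype) ⟨Bc v, h⟩ = v - Bc v
    rw [LinearMap.sub_apply, hargs v h]
    rw [LinearEquiv.coe_toLinearMap, LinearEquiv.symm_apply_apply]
    rw [Submodule.subtype_apply, hecoe v]
  have hdomain : H₀.domain = D := rfl
  -- density
  have hdense : Dense (H₀.domain : Set H) := by
    rw [hdomain, Submodule.dense_iff_topologicalClosure_eq_top,
      Submodule.topologicalClosure_eq_top_iff, Submodule.eq_bot_iff]
    intro x hx
    have h1 : ⟪Bc x, x⟫ = 0 := hx (Bc x) (hmem x)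
    have h2 : ⟪x, Bc x⟫ = 0 := by
      rw [← inner_conj_symm x (Bc x)]
      -- careful: conj ⟪Bc x, x⟫ = ⟪x, Bc x⟫
      rw [h1, map_zero]
    exact hvanish x h2
  refine ⟨H₀, hdense, ?_, ?_, ?_, ?_⟩
  · -- self-adjointness
    have hformal : H₀.IsFormalAdjoint H₀ := by
      intro x y
      obtain ⟨u, hu⟩ := x.2
      obtain ⟨w, hw⟩ := y.2
      have hx : x = ⟨Bc u, hmem u⟩ := Subtype.ext hu.symm
      have hy : y = ⟨Bc w, hmem w⟩ := Subtype.ext hw.symm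
      rw [hx, hy, hval u (hmem u), hval w (hmem w)]
      show ⟪u - Bc u, Bc w⟫ = ⟪Bc u, w - Bc w⟫
      rw [inner_sub_left, inner_sub_right, hBsym u w]
    have hle1 : H₀ ≤ H₀.adjoint := LinearPMap.IsFormalAdjoint.le_adjoint hdense hformal
    have hadj := LinearPMap.adjoint_isFormalAdjoint hdense
    have hmain : ∀ x : H₀.adjoint.domain, Bc (H₀.adjoint x + (x : H)) = (x : H) := by
      intro x
      have h1 : ∀ v : H, ⟪H₀.adjoint x, Bc v⟫ = ⟪(x : H), v - Bc v⟫ := by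
        intro v
        have := hadj x ⟨Bc v, hmem v⟩
        rwa [hval v (hmem v)] at this
      have h2 : ∀ v : H,
          ⟪Bc (H₀.adjoint x) + Bc (x : H) - (x : H), v⟫ = 0 := by
        intro v
        have e1 : ⟪Bc (H₀.adjoint x), v⟫ = ⟪(x:H), v⟫ - ⟪(x:H), Bc v⟫ := by
          rw [hBsym (H₀.adjoint x) v, h1 v, inner_sub_right]
        have e2 : ⟪Bc (x:H), v⟫ = ⟪(x:H), Bc v⟫ := hBsym _ _
        rw [inner_sub_left, inner_add_left, e1, e2]
        ring
      have h3 : Bc (H₀.adjoint x) + Bc (x:H) - (x:H) = 0 :=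
        inner_self_eq_zero.mp (h2 _)
      have h5 : Bc (H₀.adjoint x) + Bc (x:H) = (x:H) := by
        rwa [sub_eq_zero] at h3
      rw [map_add]
      exact h5
    have hle2 : H₀.adjoint ≤ H₀ := by
      refine ⟨?_, ?_⟩
      · intro y hy
        exact ⟨H₀.adjoint ⟨y, hy⟩ + y, hmain ⟨y, hy⟩⟩
      · intro x y hxy
        have h4 := hmain x
        have hy : y = ⟨Bc (H₀.adjoint x + (x:H)), hmem _⟩ :=
          Subtype.ext (by
            show (y : H) = Bc (H₀.adjoint x + (x:H))
            rw [h4]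
            exact hxy.symm)
        rw [hy, hval _ (hmem _), h4]
        abel
    exact le_antisymm hle2 hle1
  · -- positivity
    intro x
    obtain ⟨v, hv⟩ := x.2
    have hx : x = ⟨Bc v, hmem v⟩ := Subtype.ext hv.symm
    rw [hx, hval v (hmem v)]
    have hcoe : ((⟨Bc v, hmem v⟩ : D) : H) = Bc v := rfl
    rw [hcoe]
    have key1 : 0 ≤ (⟪v - Bc v, Bc (v - Bc v)⟫).re := hBposAll _
    have key2 : (⟪Bc v, Bc (Bc v)⟫).re ≤ ‖Bc v‖^2 := by
      calc (⟪Bc v, Bc (Bc v)⟫).re ≤ ‖(⟪Bc v, Bc (Bc v)⟫ : ℂ)‖ := Complex.re_le_norm _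
      _ ≤ ‖Bc v‖ * ‖Bc (Bc v)‖ := norm_inner_le_norm _ _
      _ ≤ ‖Bc v‖ * (1 * ‖Bc v‖) := by
          refine mul_le_mul_of_nonneg_left ?_ (norm_nonneg _)
          calc ‖Bc (Bc v)‖ ≤ ‖Bc‖ * ‖Bc v‖ := Bc.le_opNorm _
          _ ≤ 1 * ‖Bc v‖ := mul_le_mul_of_nonneg_right hBnorm (norm_nonneg _)
      _ = ‖Bc v‖^2 := by ring
    have e0 : ⟪Bc v, Bc v⟫ = ((‖Bc v‖^2 : ℝ) : ℂ) := by
      rw [inner_self_eq_norm_sq_to_K]; norm_cast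
    have e1 : ⟪v, Bc (Bc v)⟫ = ((‖Bc v‖^2 : ℝ) : ℂ) := by
      rw [← hBsym v (Bc v), e0]
    have hexp : ⟪v - Bc v, Bc (v - Bc v)⟫
        = ⟪v, Bc v⟫ - ((‖Bc v‖^2 : ℝ) : ℂ)
          - (((‖Bc v‖^2 : ℝ) : ℂ) - ⟪Bc v, Bc (Bc v)⟫) := by
      rw [map_sub, inner_sub_left, inner_sub_right, inner_sub_right, e1, e0]
    have hgoal : ⟪v - Bc v, Bc v⟫ = ⟪v, Bc v⟫ - ((‖Bc v‖^2 : ℝ) : ℂ) := by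
      rw [inner_sub_left, e0]
    rw [hgoal]
    have h5 : (⟪v, Bc v⟫ - ((‖Bc v‖^2 : ℝ) : ℂ)).re
        = (⟪v, Bc v⟫).re - ‖Bc v‖^2 := by
      rw [Complex.sub_re, Complex.ofReal_re]
    have h6 : (⟪v - Bc v, Bc (v - Bc v)⟫).re
        = (⟪v, Bc v⟫).re - ‖Bc v‖^2 - (‖Bc v‖^2 - (⟪Bc v, Bc (Bc v)⟫).re) := by
      rw [hexp]
      simp only [Complex.sub_re, Complex.ofReal_re]
    rw [h5]
    rw [h6] at key1
    linarith
  · -- the derivative property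
    intro x t ht
    obtain ⟨v, hv⟩ := x.2
    have hx : x = ⟨Bc v, hmem v⟩ := Subtype.ext hv.symm
    have hcoe : ((⟨Bc v, hmem v⟩ : D) : H) = Bc v := rfl
    rw [hx, hval v (hmem v), hcoe]
    -- goal : HasDerivAt (fun s => R s (Bc v)) (-(R t (v - Bc v))) t
    set φ : ℝ → H := fun u => Real.exp (-u) • R u v with hφdef
    have hφint : IntegrableOn φ (Ioi (0:ℝ)) := sgIntegrable hcont hcontr v
    have hφcont : ContinuousOn φ (Ici (0:ℝ)) :=
      ((Real.continuous_exp.comp continuous_neg).continuousOn).smul (hcont v)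
    have hkey : ∀ s : ℝ, 0 < s →
        R s (Bc v) = Real.exp s • (Bc v - ∫ u in (0:ℝ)..s, φ u) := by
      intro s hs
      have h1 : R s (Bc v) = ∫ u in Ioi (0:ℝ), R s (φ u) := by
        rw [hBapp]
        exact ((R s).integral_comp_comm hφint).symm
      have h2 : ∀ u ∈ Ioi (0:ℝ), R s (φ u) = Real.exp (-u) • R (s + u) v := by
        intro u hu
        have : R s (R u v) = R (s + u) v := by
          rw [← hsemi s u hs.le (le_of_lt hu)]; rfl
        rw [hφdef]
        simp only []
        rw [(R s).map_smul_of_tower, this]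
      have h3 : R s (Bc v) = ∫ u in Ioi (0:ℝ), Real.exp (-u) • R (s + u) v :=
        h1.trans (setIntegral_congr_fun measurableSet_Ioi h2)
      have hg : ∀ u : ℝ, (Ioi (0:ℝ)).indicator
            (fun u => Real.exp (-u) • R (s + u) v) u
          = (Ioi s).indicator (fun w => Real.exp s • φ w) (u + s) := by
        intro u
        by_cases hu : u ∈ Ioi (0:ℝ)
        · rw [indicator_of_mem hu, indicator_of_mem (by simpa using hu)]
          rw [hφdef]
          simp only []
          rw [smul_smul, ← Real.exp_add]
          rw [show s + -(u + s) = -u from by ring, add_comm u s]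
        · rw [indicator_of_notMem hu, indicator_of_notMem (by simpa using hu)]
      have h4 : (∫ u in Ioi (0:ℝ), Real.exp (-u) • R (s + u) v)
          = ∫ w in Ioi s, Real.exp s • φ w := by
        rw [← integral_indicator measurableSet_Ioi, ← integral_indicator measurableSet_Ioi]
        calc ∫ u, (Ioi (0:ℝ)).indicator (fun u => Real.exp (-u) • R (s + u) v) u
            = ∫ u, (Ioi s).indicator (fun w => Real.exp s • φ w) (u + s) := by
              exact integral_congr_ae (Filter.Eventually.of_forall hg)
          _ = ∫ w, (Ioi s).indicator (fun w => Real.exp s • φ w) w :=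
              integral_add_right_eq_self _ s
      have h5 : (∫ w in Ioi s, Real.exp s • φ w) = Real.exp s • ∫ w in Ioi s, φ w :=
        integral_smul _ _
      have h6 : (∫ w in Ioi (0:ℝ), φ w) = (∫ w in Ioc 0 s, φ w) + ∫ w in Ioi s, φ w := by
        rw [← setIntegral_union (Ioc_disjoint_Ioi le_rfl) measurableSet_Ioi
          (hφint.mono_set Ioc_subset_Ioi_self) (hφint.mono_set (Ioi_subset_Ioi hs.le)),
          Ioc_union_Ioi_eq_Ioi hs.le]
      have h7 : (∫ u in (0:ℝ)..s, φ u) = ∫ w in Ioc 0 s, φ w :=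
        intervalIntegral.integral_of_le hs.le
      have h8 : (∫ w in Ioi s, φ w) = Bc v - ∫ w in Ioc 0 s, φ w := by
        rw [hBapp]
        rw [show (∫ u in Ioi (0:ℝ), Real.exp (-u) • R u v) = ∫ w in Ioi (0:ℝ), φ w from rfl]
        rw [h6]
        abel
      rw [h3, h4, h5, h8, h7]
    have hInt01 : IntervalIntegrable φ volume 0 t := by
      refine (hφcont.mono ?_).intervalIntegrable
      rw [uIcc_of_le ht.le]
      exact Icc_subset_Ici_self
    have hφIoi : ContinuousOn φ (Ioi (0:ℝ)) := hφcont.mono Ioi_subset_Ici_self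
    have hmeas : StronglyMeasurableAtFilter φ (𝓝 t) :=
      hφIoi.stronglyMeasurableAtFilter isOpen_Ioi t ht
    have hca : ContinuousAt φ t := hφIoi.continuousAt (Ioi_mem_nhds ht)
    have hFTC : HasDerivAt (fun s => ∫ u in (0:ℝ)..s, φ u) (φ t) t :=
      intervalIntegral.integral_hasDerivAt_right hInt01 hmeas hca
    have hsub : HasDerivAt (fun s => Bc v - ∫ u in (0:ℝ)..s, φ u) (-φ t) t :=
      hFTC.const_sub (Bc v)
    have hexp : HasDerivAt Real.exp (Real.exp t) t := Real.hasDerivAt_exp t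
    have hF : HasDerivAt (fun s => Real.exp s • (Bc v - ∫ u in (0:ℝ)..s, φ u))
        (Real.exp t • (-φ t) + Real.exp t • (Bc v - ∫ u in (0:ℝ)..t, φ u)) t :=
      hexp.smul hsub
    have heq : (fun s => R s (Bc v))
        =ᶠ[𝓝 t] (fun s => Real.exp s • (Bc v - ∫ u in (0:ℝ)..s, φ u)) := by
      filter_upwards [Ioi_mem_nhds ht] with s hs using hkey s hs
    have hfinal := hF.congr_of_eventuallyEq heq
    have hvalue : Real.exp t • (-φ t) + Real.exp t • (Bc v - ∫ u in (0:ℝ)..t, φ u)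
        = -(R t (v - Bc v)) := by
      rw [← hkey t ht]
      have h9 : Real.exp t • (-φ t) = -(R t v) := by
        rw [hφdef]
        simp only []
        rw [smul_neg, smul_smul, ← Real.exp_add]
        rw [show t + -t = 0 from by ring, Real.exp_zero, one_smul]
      rw [h9, map_sub]
      abel
    rw [← hvalue]
    exact hfinal
  · -- ground state
    intro Ω hΩ
    have hBΩ : Bc Ω = Ω := by
      rw [hBapp]
      rw [setIntegral_congr_fun measurableSet_Ioi
        (g := fun s : ℝ => Real.exp (-s) • Ω) (fun s hs => by rw [hΩ s (le_of_lt hs)])]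
      rw [integral_smul_const, integral_exp_neg_Ioi_zero, one_smul]
    have hΩmem : Ω ∈ H₀.domain := by rw [← hBΩ]; exact hmem Ω
    refine ⟨hΩmem, ?_⟩
    have hsub : (⟨Ω, hΩmem⟩ : H₀.domain) = ⟨Bc Ω, hmem Ω⟩ := Subtype.ext hBΩ.symm
    rw [hsub, hval Ω (hmem Ω), hBΩ, sub_self]
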